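/- In the Leximin manipulation lower-bound instance, the maximin-optimal choice of d_2 (the probability mass on Type-2 panels) is d_2 = min{(k−2)(c−4)/(n − n_min + 2(c−4)), 1}: at this value the probabilities p_000 = p_110 = p_100 are equalized, increasing d_2 decreases p_000, and decreasing d_2 decreases p_100, so this d_2 maximizes the minimum of {p_000, p_100, p_010}. -/

import Mathlib

/-- The maximin-optimal choice of d_2 in the Leximin manipulation
lower-bound instance is d* = min{(k−2)(c−4)/(n − n_min + 2(c−4)), 1}: it
maximizes min{p_000(d_2), p_100(d_2), p_010(d_2)} over d_2 ∈ [0,1]. -/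
theorem stmt16 (n nmin c k : ℕ) (hk : 6 ≤ k) (hk2 : 2 ∣ k)
    (h1 : k + 5 ≤ nmin) (h2 : nmin * k ≤ n) (h3 : 5 ≤ c) (h4 : c ≤ nmin - k)
    (p000 p100 p010 : ℝ → ℝ)
    (hp000 : ∀ d, p000 d = ((k : ℝ) / 2 - 1 - d) / (((n : ℝ) - nmin) / 2))
    (hp100 : ∀ d, p100 d = d / ((c : ℝ) - 4))
    (hp010 : ∀ d, p010 d = d)
    (dstar : ℝ)
    (hdstar : dstar =
      min (((k : ℝ) - 2) * ((c : ℝ) - 4) / ((n : ℝ) - nmin + 2 * ((c : ℝ) - 4))) 1) :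
    ∀ d ∈ Set.Icc (0 : ℝ) 1,
      min (p000 d) (min (p100 d) (p010 d))
        ≤ min (p000 dstar) (min (p100 dstar) (p010 dstar)) := by
  have hK : (6:ℝ) ≤ (k:ℝ) := by exact_mod_cast hk
  have hC : (1:ℝ) ≤ (c:ℝ) - 4 := by
    have : (5:ℝ) ≤ (c:ℝ) := by exact_mod_cast h3
    linarith
  have hM : (11:ℝ) ≤ (nmin:ℝ) := by
    have : (11:ℕ) ≤ nmin := by omega
    exact_mod_cast this
  have hn6 : (nmin:ℝ) * 6 ≤ (n:ℝ) := by
    have : nmin * 6 ≤ n := le_trans (Nat.mul_le_mul_left nmin hk) h2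
    exact_mod_cast this
  have hA : (55:ℝ) ≤ (n:ℝ) - nmin := by nlinarith
  set A : ℝ := (n:ℝ) - nmin with hAdef
  set C : ℝ := (c:ℝ) - 4 with hCdef
  set D : ℝ := A + 2 * C with hDdef
  have hApos : (0:ℝ) < A := by linarith
  have hCpos : (0:ℝ) < C := by linarith
  have hDpos : (0:ℝ) < D := by simp only [hDdef]; linarith
  set t : ℝ := ((k:ℝ) - 2) * C / D with htdef
  have htpos : (0:ℝ) < t := by
    apply div_pos _ hDpos
    nlinarith
  have htD : t * D = ((k:ℝ) - 2) * C := by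
    rw [htdef, div_mul_cancel₀ _ hDpos.ne']
  have hds0 : 0 ≤ dstar := by
    rw [hdstar]
    exact le_min htpos.le zero_le_one
  have hds1 : dstar ≤ 1 := by rw [hdstar]; exact min_le_right _ _
  -- key: p100 dstar ≤ p000 dstar
  have hi : p100 dstar ≤ p000 dstar := by
    rw [hp100, hp000]
    rw [div_le_div_iff₀ hCpos (by linarith : (0:ℝ) < A / 2)]
    rcases le_total t 1 with h | h
    · have hdt : dstar = t := by rw [hdstar]; exact min_eq_left h
      rw [hdt]
      nlinarith [htD]
    · have hdt : dstar = 1 := by rw [hdstar]; exact min_eq_right h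
      rw [hdt]
      have hkey : D ≤ ((k:ℝ) - 2) * C := by
        rw [← htD]; nlinarith
      simp only [hDdef] at hkey
      nlinarith
  have hii : p100 dstar ≤ p010 dstar := by
    rw [hp100, hp010, div_le_iff₀ hCpos]
    nlinarith
  have hRHS : min (p000 dstar) (min (p100 dstar) (p010 dstar)) = p100 dstar := by
    rw [min_eq_left hii, min_eq_right hi]
  rw [hRHS]
  intro d hd
  obtain ⟨hd0, hd1⟩ := hd
  rcases le_total d dstar with h | h
  · calc min (p000 d) (min (p100 d) (p010 d)) ≤ p100 d :=
          le_trans (min_le_right _ _) (min_le_left _ _)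
      _ ≤ p100 dstar := by rw [hp100, hp100]; gcongr
  · rcases le_total t 1 with h' | h'
    · have hdt : dstar = t := by rw [hdstar]; exact min_eq_left h'
      have heq : p000 dstar = p100 dstar := by
        rw [hp000, hp100, hdt, div_eq_div_iff (by linarith : (A:ℝ) / 2 ≠ 0) (by linarith : C ≠ 0)]
        have htD' : t * (A + 2 * C) = ((k:ℝ) - 2) * C := by rw [← hDdef]; exact htD
        linear_combination (-(1:ℝ)/2) * htD'
      calc min (p000 d) (min (p100 d) (p010 d)) ≤ p000 d := min_le_left _ _
        _ ≤ p000 dstar := by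
            rw [hp000, hp000]
            gcongr
        _ = p100 dstar := heq
    · have hdt : dstar = 1 := by rw [hdstar]; exact min_eq_right h'
      have hde : d = dstar := le_antisymm (hdt ▸ hd1) h
      rw [hde]
      exact le_trans (min_le_right _ _) (min_le_left _ _)
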